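/- If the spectral radius of A_δ satisfies ρ(A_δ) < 1, then the LSTM system is incrementally input-to-state stable (δISS) in X and U: there exist a class-KL function β and a class-K∞ function γ such that for every k ≥ 0, every pair of initial states x_{a,0}, x_{b,0} ∈ X and every pair of input sequences u_{a,0},…,u_{a,k−1} and u_{b,0},…,u_{b,k−1} with all u_{a,h}, u_{b,h} ∈ U, the resulting LSTM trajectories satisfy ‖x_{a,k} − x_{b,k}‖ ≤ β(‖x_{a,0} − x_{b,0}‖, k) + γ(max_{0≤h<k} ‖u_{a,h} − u_{b,h}‖). -/

import Mathlib

open Matrix Filter Set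
open scoped ENNReal NNReal BigOperators

noncomputable section

namespace LSTMmpc

/-- The logistic sigmoid `σ(z) = 1/(1+e^{-z})`. -/
def sigmoid (z : ℝ) : ℝ := 1 / (1 + Real.exp (-z))

/-- Euclidean norm of a finite real vector. -/
def enorm {k : ℕ} (v : Fin k → ℝ) : ℝ := Real.sqrt (∑ i, v i ^ 2)

/-- Sup (∞) norm of a finite real vector. -/
def vinf {k : ℕ} (v : Fin k → ℝ) : ℝ := ⨆ i, |v i|

/-- Spectral (ℓ²-induced) norm of a real matrix. -/
def spec {a b : ℕ} (M : Matrix (Fin a) (Fin b) ℝ) : ℝ :=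
  ⨆ v : {v : Fin b → ℝ // enorm v ≤ 1}, enorm (M.mulVec v.1)

/-- Induced ∞-norm (maximum absolute row sum) of the horizontal block `[s•A, B, v]`. -/
def rowNorm3 {n m : ℕ} (s : ℝ) (A : Matrix (Fin n) (Fin m) ℝ)
    (B : Matrix (Fin n) (Fin n) ℝ) (v : Fin n → ℝ) : ℝ :=
  ⨆ i, (∑ j, |s * A i j| + ∑ j, |B i j| + |v i|)

/-- Induced ∞-norm of the horizontal block `[s•A, B, v, C, t•D]`. -/
def rowNorm5 {n m p : ℕ} (s : ℝ) (A : Matrix (Fin n) (Fin m) ℝ)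
    (B : Matrix (Fin n) (Fin n) ℝ) (v : Fin n → ℝ)
    (C : Matrix (Fin n) (Fin n) ℝ) (t : ℝ) (D : Matrix (Fin n) (Fin p) ℝ) : ℝ :=
  ⨆ i, (∑ j, |s * A i j| + ∑ j, |B i j| + |v i| + ∑ j, |C i j| + ∑ j, |t * D i j|)

/-- Weighted norm `‖v‖_P = √(vᵀ P v)`. -/
def wnorm {k : ℕ} (P : Matrix (Fin k) (Fin k) ℝ) (v : Fin k → ℝ) : ℝ :=
  Real.sqrt (v ⬝ᵥ P.mulVec v)

/-- Minimum eigenvalue of a hermitian real matrix. -/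
def lamMin {k : ℕ} (P : Matrix (Fin k) (Fin k) ℝ) (hP : P.IsHermitian) : ℝ :=
  ⨅ i, hP.eigenvalues i

/-- Maximum eigenvalue of a hermitian real matrix. -/
def lamMax {k : ℕ} (P : Matrix (Fin k) (Fin k) ℝ) (hP : P.IsHermitian) : ℝ :=
  ⨆ i, hP.eigenvalues i

/-- Spectral radius (over `ℂ`) of a real square matrix. -/
def specRad {k : ℕ} (M : Matrix (Fin k) (Fin k) ℝ) : ℝ≥0∞ :=
  spectralRadius ℂ (M.map (fun x : ℝ => (x : ℂ)))

/-- Class `K∞` functions `[0,∞) → [0,∞)`. -/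
def IsClassKInf (γ : ℝ → ℝ) : Prop :=
  ContinuousOn γ (Set.Ici 0) ∧ γ 0 = 0 ∧ StrictMonoOn γ (Set.Ici 0) ∧
    (∀ s, 0 ≤ s → 0 ≤ γ s) ∧ Tendsto γ atTop atTop

/-- Class `KL` functions. -/
def IsClassKL (β : ℝ → ℕ → ℝ) : Prop :=
  (∀ k, ContinuousOn (fun s => β s k) (Set.Ici 0) ∧
      StrictMonoOn (fun s => β s k) (Set.Ici 0) ∧ β 0 k = 0) ∧
  (∀ s, 0 < s → StrictAnti (fun k => β s k) ∧ Tendsto (fun k => β s k) atTop (nhds 0)) ∧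
  (∀ s, 0 ≤ s → ∀ k, 0 ≤ β s k)

/-- Weights of an LSTM network. -/
structure LSTM (n m p : ℕ) where
  Wf : Matrix (Fin n) (Fin m) ℝ
  Wi : Matrix (Fin n) (Fin m) ℝ
  Wc : Matrix (Fin n) (Fin m) ℝ
  Wo : Matrix (Fin n) (Fin m) ℝ
  Uf : Matrix (Fin n) (Fin n) ℝ
  Ui : Matrix (Fin n) (Fin n) ℝ
  Uc : Matrix (Fin n) (Fin n) ℝ
  Uo : Matrix (Fin n) (Fin n) ℝ
  bf : Fin n → ℝ
  bi : Fin n → ℝ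
  bc : Fin n → ℝ
  bo : Fin n → ℝ
  Wy : Matrix (Fin p) (Fin n) ℝ
  bY : Fin p → ℝ

/-- LSTM state `(c, h)`. -/
abbrev State (n : ℕ) := (Fin n → ℝ) × (Fin n → ℝ)

/-- Augmented state `(c, h, d)`. -/
abbrev AugState (n p : ℕ) := (Fin n → ℝ) × (Fin n → ℝ) × (Fin p → ℝ)

variable {n m p : ℕ}

def stepC (S : LSTM n m p) (u : Fin m → ℝ) (c h : Fin n → ℝ) : Fin n → ℝ := fun j =>
  sigmoid ((S.Wf.mulVec u + S.Uf.mulVec h + S.bf) j) * c j +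
    sigmoid ((S.Wi.mulVec u + S.Ui.mulVec h + S.bi) j) *
      Real.tanh ((S.Wc.mulVec u + S.Uc.mulVec h + S.bc) j)

def stepH (S : LSTM n m p) (u : Fin m → ℝ) (c h : Fin n → ℝ) : Fin n → ℝ := fun j =>
  sigmoid ((S.Wo.mulVec u + S.Uo.mulVec h + S.bo) j) * Real.tanh (stepC S u c h j)

/-- One step of the LSTM dynamics `x⁺ = f(x, u)`. -/
def step (S : LSTM n m p) (x : State n) (u : Fin m → ℝ) : State n :=
  (stepC S u x.1 x.2, stepH S u x.1 x.2)

/-- Output map `g(x) = W_y h + b_y`. -/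
def out (S : LSTM n m p) (x : State n) : Fin p → ℝ := S.Wy.mulVec x.2 + S.bY

/-- LSTM trajectory. -/
def traj (S : LSTM n m p) (x0 : State n) (u : ℕ → Fin m → ℝ) : ℕ → State n
  | 0 => x0
  | k + 1 => step S (traj S x0 u k) (u k)

def sFb (S : LSTM n m p) (umax : ℝ) : ℝ := sigmoid (rowNorm3 umax S.Wf S.Uf S.bf)
def sIb (S : LSTM n m p) (umax : ℝ) : ℝ := sigmoid (rowNorm3 umax S.Wi S.Ui S.bi)
def sOb (S : LSTM n m p) (umax : ℝ) : ℝ := sigmoid (rowNorm3 umax S.Wo S.Uo S.bo)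
def sCb (S : LSTM n m p) (umax : ℝ) : ℝ := Real.tanh (rowNorm3 umax S.Wc S.Uc S.bc)
def sXb (S : LSTM n m p) (umax : ℝ) : ℝ :=
  Real.tanh (sIb S umax * sCb S umax / (1 - sFb S umax))
def alphaD (S : LSTM n m p) (umax : ℝ) : ℝ :=
  (1/4) * spec S.Uf * (sIb S umax * sCb S umax / (1 - sFb S umax)) +
    sIb S umax * spec S.Uc + (1/4) * spec S.Ui * sCb S umax
def betaD (S : LSTM n m p) (umax : ℝ) : ℝ :=
  (1/4) * spec S.Wf * (sIb S umax * sCb S umax / (1 - sFb S umax)) +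
    sIb S umax * spec S.Wc + (1/4) * spec S.Wi * sCb S umax
def Adelta (S : LSTM n m p) (umax : ℝ) : Matrix (Fin 2) (Fin 2) ℝ :=
  !![sFb S umax, alphaD S umax;
     sOb S umax * sFb S umax, alphaD S umax * sOb S umax + (1/4) * sXb S umax * spec S.Uo]
def Bdelta (S : LSTM n m p) (umax : ℝ) : Fin 2 → ℝ :=
  ![betaD S umax, betaD S umax * sOb S umax + (1/4) * sXb S umax * spec S.Wo]

def setU (m : ℕ) (umax : ℝ) : Set (Fin m → ℝ) := {u | vinf u ≤ umax}
def setH (n : ℕ) : Set (Fin n → ℝ) := {h | vinf h ≤ 1}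
def setC (S : LSTM n m p) (umax : ℝ) : Set (Fin n → ℝ) :=
  {c | vinf c ≤ sIb S umax * sCb S umax / (1 - sFb S umax)}
def setX (S : LSTM n m p) (umax : ℝ) : Set (State n) := (setC S umax) ×ˢ (setH n)
def setD (p : ℕ) (dmax : ℝ) : Set (Fin p → ℝ) := {d | vinf d ≤ dmax}

/-- Euclidean norm of the full state. -/
def xnorm {n : ℕ} (x : State n) : ℝ := Real.sqrt (∑ i, x.1 i ^ 2 + ∑ i, x.2 i ^ 2)

/-- Euclidean norm of the augmented state. -/
def chinorm {n p : ℕ} (χ : AugState n p) : ℝ :=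
  Real.sqrt (∑ i, χ.1 i ^ 2 + ∑ i, χ.2.1 i ^ 2 + ∑ i, χ.2.2 i ^ 2)

/-- Incremental input-to-state stability of the LSTM in `X` and `U`. -/
def deltaISS (S : LSTM n m p) (umax : ℝ) : Prop :=
  ∃ β γ, IsClassKL β ∧ IsClassKInf γ ∧
    ∀ (k : ℕ) (xa0 xb0 : State n), xa0 ∈ setX S umax → xb0 ∈ setX S umax →
      ∀ ua ub : ℕ → Fin m → ℝ,
        (∀ h < k, ua h ∈ setU m umax) → (∀ h < k, ub h ∈ setU m umax) →
        xnorm (traj S xa0 ua k - traj S xb0 ub k) ≤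
          β (xnorm (xa0 - xb0)) k + γ (⨆ h ∈ Finset.range k, enorm (ua h - ub h))

/-- Observer gains. -/
structure Gains (n p : ℕ) where
  Lf : Matrix (Fin n) (Fin p) ℝ
  Li : Matrix (Fin n) (Fin p) ℝ
  Lo : Matrix (Fin n) (Fin p) ℝ
  Ld : Matrix (Fin p) (Fin p) ℝ

/-- Componentwise saturation to `[-dmax, dmax]`. -/
def sat {p : ℕ} (dmax : ℝ) (v : Fin p → ℝ) : Fin p → ℝ := fun j =>
  min (max (v j) (-dmax)) dmax

/-- Observer output `ŷ = W_y ĥ + b_y + d̂`. -/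
def yhat (S : LSTM n m p) (hh : Fin n → ℝ) (dh : Fin p → ℝ) : Fin p → ℝ :=
  S.Wy.mulVec hh + S.bY + dh

def obsC (S : LSTM n m p) (G : Gains n p) (u : Fin m → ℝ) (y : Fin p → ℝ)
    (ch hh : Fin n → ℝ) (dh : Fin p → ℝ) : Fin n → ℝ := fun j =>
  sigmoid ((S.Wf.mulVec u + S.Uf.mulVec hh + S.bf + G.Lf.mulVec (y - yhat S hh dh)) j) * ch j +
    sigmoid ((S.Wi.mulVec u + S.Ui.mulVec hh + S.bi + G.Li.mulVec (y - yhat S hh dh)) j) *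
      Real.tanh ((S.Wc.mulVec u + S.Uc.mulVec hh + S.bc) j)

def obsH (S : LSTM n m p) (G : Gains n p) (u : Fin m → ℝ) (y : Fin p → ℝ)
    (ch hh : Fin n → ℝ) (dh : Fin p → ℝ) : Fin n → ℝ := fun j =>
  sigmoid ((S.Wo.mulVec u + S.Uo.mulVec hh + S.bo + G.Lo.mulVec (y - yhat S hh dh)) j) *
    Real.tanh (obsC S G u y ch hh dh j)

def obsD (S : LSTM n m p) (G : Gains n p) (dmax : ℝ) (y : Fin p → ℝ)
    (hh : Fin n → ℝ) (dh : Fin p → ℝ) : Fin p → ℝ :=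
  sat dmax (dh + G.Ld.mulVec (y - yhat S hh dh))

/-- One step of the observer. -/
def obsStep (S : LSTM n m p) (G : Gains n p) (dmax : ℝ) (u : Fin m → ℝ) (y : Fin p → ℝ)
    (χ : AugState n p) : AugState n p :=
  (obsC S G u y χ.1 χ.2.1 χ.2.2, obsH S G u y χ.1 χ.2.1 χ.2.2, obsD S G dmax y χ.2.1 χ.2.2)

/-- Observer trajectory. -/
def obsTraj (S : LSTM n m p) (G : Gains n p) (dmax : ℝ) (u : ℕ → Fin m → ℝ)
    (y : ℕ → Fin p → ℝ) (χ0 : AugState n p) : ℕ → AugState n p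
  | 0 => χ0
  | k + 1 => obsStep S G dmax (u k) (y k) (obsTraj S G dmax u y χ0 k)

def sFh (S : LSTM n m p) (G : Gains n p) (umax dmax : ℝ) : ℝ :=
  sigmoid (rowNorm5 umax S.Wf (S.Uf - G.Lf * S.Wy) S.bf (G.Lf * S.Wy) (2 * dmax) G.Lf)
def sIh (S : LSTM n m p) (G : Gains n p) (umax dmax : ℝ) : ℝ :=
  sigmoid (rowNorm5 umax S.Wi (S.Ui - G.Li * S.Wy) S.bi (G.Li * S.Wy) (2 * dmax) G.Li)
def sOh (S : LSTM n m p) (G : Gains n p) (umax dmax : ℝ) : ℝ :=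
  sigmoid (rowNorm5 umax S.Wo (S.Uo - G.Lo * S.Wy) S.bo (G.Lo * S.Wy) (2 * dmax) G.Lo)
def alphaH (S : LSTM n m p) (G : Gains n p) (umax : ℝ) : ℝ :=
  (1/4) * (sIb S umax * sCb S umax / (1 - sFb S umax)) * spec (S.Uf - G.Lf * S.Wy) +
    sIb S umax * spec S.Uc + (1/4) * sCb S umax * spec (S.Ui - G.Li * S.Wy)
def betaH (S : LSTM n m p) (G : Gains n p) (umax : ℝ) : ℝ :=
  (1/4) * (sIb S umax * sCb S umax / (1 - sFb S umax)) * spec G.Lf +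
    (1/4) * sCb S umax * spec G.Li
def gammaH (S : LSTM n m p) (G : Gains n p) (umax dmax : ℝ) : ℝ :=
  sOh S G umax dmax * alphaH S G umax + (1/4) * sXb S umax * spec (S.Uo - G.Lo * S.Wy)
def Ad (S : LSTM n m p) (G : Gains n p) (umax dmax : ℝ) : Matrix (Fin 3) (Fin 3) ℝ :=
  !![sFh S G umax dmax, alphaH S G umax, betaH S G umax;
     sOh S G umax dmax * sFh S G umax dmax, gammaH S G umax dmax,
       sOh S G umax dmax * betaH S G umax + (1/4) * sXb S umax * spec G.Lo;
     0, spec (G.Ld * S.Wy), spec ((1 : Matrix (Fin p) (Fin p) ℝ) - G.Ld)]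

def setChat (S : LSTM n m p) (G : Gains n p) (umax dmax : ℝ) : Set (Fin n → ℝ) :=
  {c | vinf c ≤ sIh S G umax dmax * sCb S umax / (1 - sFh S G umax dmax)}
def setIhat (S : LSTM n m p) (G : Gains n p) (umax dmax : ℝ) : Set (AugState n p) :=
  (setChat S G umax dmax) ×ˢ ((setH n) ×ˢ (setD p dmax))

/-- Incremental Lyapunov function for the LSTM. -/
def Vs {n : ℕ} (Ps : Matrix (Fin 2) (Fin 2) ℝ) (xa xb : State n) : ℝ :=
  wnorm Ps ![enorm (xa.1 - xb.1), enorm (xa.2 - xb.2)]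

/-- Lyapunov function for the observer estimation error. -/
def Vo {n p : ℕ} (Po : Matrix (Fin 3) (Fin 3) ℝ) (χh χ : AugState n p) : ℝ :=
  wnorm Po ![enorm (χh.1 - χ.1), enorm (χh.2.1 - χ.2.1), enorm (χh.2.2 - χ.2.2)]

/-- Disturbance-augmented LSTM update applied to the observer state. -/
def faug (S : LSTM n m p) (χ : AugState n p) (u : Fin m → ℝ) : AugState n p :=
  (stepC S u χ.1 χ.2.1, stepH S u χ.1 χ.2.1, χ.2.2)

def alphaBar (S : LSTM n m p) (G : Gains n p) (umax dmax : ℝ) : ℝ :=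
  (1/4) * (sIh S G umax dmax * sCb S umax / (1 - sFh S G umax dmax)) * spec (G.Lf * S.Wy) +
    (1/4) * sCb S umax * spec (G.Li * S.Wy)
def betaBar (S : LSTM n m p) (G : Gains n p) (umax dmax : ℝ) : ℝ :=
  (1/4) * (sIh S G umax dmax * sCb S umax / (1 - sFh S G umax dmax)) * spec G.Lf +
    (1/4) * sCb S umax * spec G.Li
def gammaBar (S : LSTM n m p) (G : Gains n p) (umax dmax : ℝ) : ℝ :=
  (1/4) * Real.tanh (sIh S G umax dmax * sCb S umax / (1 - sFh S G umax dmax))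
def Lmat (S : LSTM n m p) (G : Gains n p) (umax dmax : ℝ) : Matrix (Fin 3) (Fin 3) ℝ :=
  !![0, alphaBar S G umax dmax, betaBar S G umax dmax;
     0, gammaBar S G umax dmax * spec (G.Lo * S.Wy) + sOb S umax * alphaBar S G umax dmax,
       gammaBar S G umax dmax * spec G.Lo + sOb S umax * betaBar S G umax dmax;
     0, spec (G.Ld * S.Wy), spec G.Ld]


/-! ### Auxiliary lemmas -/

section Aux

lemma one_add_exp_pos (x : ℝ) : 0 < 1 + Real.exp x := by positivity

lemma sigmoid_pos (x : ℝ) : 0 < sigmoid x := by unfold sigmoid; positivity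

lemma sigmoid_lt_one (x : ℝ) : sigmoid x < 1 := by
  unfold sigmoid
  rw [div_lt_one (one_add_exp_pos _)]
  linarith [Real.exp_pos (-x)]

lemma sigmoid_mono {x y : ℝ} (h : x ≤ y) : sigmoid x ≤ sigmoid y := by
  unfold sigmoid
  exact one_div_le_one_div_of_le (one_add_exp_pos _)
    (by linarith [Real.exp_le_exp.mpr (neg_le_neg h)])

lemma hasDerivAt_sigmoid (x : ℝ) :
    HasDerivAt sigmoid (-(-Real.exp (-x)) / (1 + Real.exp (-x)) ^ 2) x := by
  have h1 : HasDerivAt (fun y : ℝ => 1 + Real.exp (-y)) (-Real.exp (-x)) x := by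
    have h0 : HasDerivAt (fun y : ℝ => Real.exp (-y)) (Real.exp (-x) * (-1)) x :=
      (Real.hasDerivAt_exp (-x)).comp x (hasDerivAt_neg x)
    simpa using h0.const_add 1
  have h2 := h1.inv (ne_of_gt (one_add_exp_pos _))
  have h3 : sigmoid = fun y : ℝ => (1 + Real.exp (-y))⁻¹ := by
    funext y; simp [sigmoid, one_div]
  rw [h3]
  exact h2

lemma sigmoid_lipschitz (x y : ℝ) : |sigmoid x - sigmoid y| ≤ (1/4) * |x - y| := by
  have key : ∀ z ∈ Set.univ, HasDerivWithinAt sigmoid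
      ((fun w : ℝ => -(-Real.exp (-w)) / (1 + Real.exp (-w)) ^ 2) z) Set.univ z :=
    fun z _ => (hasDerivAt_sigmoid z).hasDerivWithinAt
  have bound : ∀ z ∈ Set.univ,
      ‖(fun w : ℝ => -(-Real.exp (-w)) / (1 + Real.exp (-w)) ^ 2) z‖ ≤ (1/4 : ℝ) := by
    intro z _
    have heq : -(-Real.exp (-z)) / (1 + Real.exp (-z)) ^ 2
        = Real.exp (-z) / (1 + Real.exp (-z)) ^ 2 := by ring
    simp only [Real.norm_eq_abs]
    rw [heq, abs_of_nonneg (by positivity), div_le_iff₀ (by positivity)]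
    nlinarith [Real.exp_pos (-z), sq_nonneg (1 - Real.exp (-z))]
  have h := convex_univ.norm_image_sub_le_of_norm_hasDerivWithin_le key bound
    (Set.mem_univ y) (Set.mem_univ x)
  simpa [Real.norm_eq_abs] using h

lemma tanh_eq' (x : ℝ) : Real.tanh x = 1 - 2 / (Real.exp (2 * x) + 1) := by
  have hc : (0:ℝ) < Real.cosh x := Real.cosh_pos x
  have h3 : (0:ℝ) < Real.exp x := Real.exp_pos x
  have h2 : Real.exp (2 * x) = Real.exp x * Real.exp x := by rw [two_mul, Real.exp_add]
  have h4 : (0:ℝ) < Real.exp x * Real.exp x + 1 := by positivity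
  rw [Real.tanh_eq_sinh_div_cosh, div_eq_iff hc.ne']
  rw [Real.sinh_eq, Real.cosh_eq, Real.exp_neg, h2]
  field_simp
  ring

lemma tanh_mono {x y : ℝ} (h : x ≤ y) : Real.tanh x ≤ Real.tanh y := by
  rw [tanh_eq', tanh_eq']
  have h1 : (0:ℝ) < Real.exp (2 * x) + 1 := by positivity
  have h3 : Real.exp (2 * x) + 1 ≤ Real.exp (2 * y) + 1 := by
    linarith [Real.exp_le_exp.mpr (by linarith : 2 * x ≤ 2 * y)]
  have := div_le_div_of_nonneg_left (by norm_num : (0:ℝ) ≤ 2) h1 h3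
  linarith

lemma tanh_nonneg' {x : ℝ} (h : 0 ≤ x) : 0 ≤ Real.tanh x := by
  have := tanh_mono h
  rwa [Real.tanh_zero] at this

lemma abs_tanh_le {x M : ℝ} (h : |x| ≤ M) : |Real.tanh x| ≤ Real.tanh M := by
  rcases abs_le.mp h with ⟨h1, h2⟩
  rw [abs_le]
  refine ⟨?_, tanh_mono h2⟩
  rw [← Real.tanh_neg]
  exact tanh_mono h1

lemma abs_tanh_le_one (x : ℝ) : |Real.tanh x| ≤ 1 := by
  have hu : (0:ℝ) < Real.exp (2 * x) := Real.exp_pos _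
  have h1 : (0:ℝ) < Real.exp (2 * x) + 1 := by linarith
  have h2 : 2 / (Real.exp (2 * x) + 1) ≤ 2 := by
    rw [div_le_iff₀ h1]; nlinarith
  have h3 : 0 < 2 / (Real.exp (2 * x) + 1) := by positivity
  rw [abs_le, tanh_eq']
  constructor <;> linarith

lemma hasDerivAt_tanh (x : ℝ) :
    HasDerivAt Real.tanh (-(2 * (-(2 * Real.exp (2 * x)) / (Real.exp (2 * x) + 1) ^ 2))) x := by
  have h1 : HasDerivAt (fun y : ℝ => Real.exp (2 * y) + 1) (2 * Real.exp (2 * x)) x := by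
    have hin : HasDerivAt (fun y : ℝ => 2 * y) 2 x := by
      simpa using (hasDerivAt_id x).const_mul 2
    have h0 : HasDerivAt (fun y : ℝ => Real.exp (2 * y)) (Real.exp (2 * x) * 2) x :=
      (Real.hasDerivAt_exp (2 * x)).comp x hin
    simpa [mul_comm] using h0.add_const 1
  have h2 := h1.inv (by positivity)
  have h4 : HasDerivAt (fun y : ℝ => 1 - 2 * (Real.exp (2 * y) + 1)⁻¹)
      (-(2 * (-(2 * Real.exp (2 * x)) / (Real.exp (2 * x) + 1) ^ 2))) x :=
    (h2.const_mul 2).const_sub 1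
  have h5 : Real.tanh = fun y : ℝ => 1 - 2 * (Real.exp (2 * y) + 1)⁻¹ := by
    funext y; rw [tanh_eq']; ring
  rw [h5]
  exact h4

lemma tanh_lipschitz (x y : ℝ) : |Real.tanh x - Real.tanh y| ≤ |x - y| := by
  have key : ∀ z ∈ Set.univ, HasDerivWithinAt Real.tanh
      ((fun w : ℝ => -(2 * (-(2 * Real.exp (2 * w)) / (Real.exp (2 * w) + 1) ^ 2))) z)
      Set.univ z := fun z _ => (hasDerivAt_tanh z).hasDerivWithinAt
  have bound : ∀ z ∈ Set.univ,
      ‖(fun w : ℝ => -(2 * (-(2 * Real.exp (2 * w)) / (Real.exp (2 * w) + 1) ^ 2))) z‖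
        ≤ (1 : ℝ) := by
    intro z _
    have heq : -(2 * (-(2 * Real.exp (2 * z)) / (Real.exp (2 * z) + 1) ^ 2))
        = 4 * Real.exp (2 * z) / (Real.exp (2 * z) + 1) ^ 2 := by ring
    simp only [Real.norm_eq_abs]
    rw [heq, abs_of_nonneg (by positivity), div_le_iff₀ (by positivity)]
    nlinarith [sq_nonneg (Real.exp (2 * z) - 1)]
  have h := convex_univ.norm_image_sub_le_of_norm_hasDerivWithin_le key bound
    (Set.mem_univ y) (Set.mem_univ x)
  simpa [Real.norm_eq_abs] using h

/-! ### enorm lemmas -/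

lemma enorm_nonneg {k : ℕ} (v : Fin k → ℝ) : 0 ≤ enorm v := Real.sqrt_nonneg _

lemma enorm_eq_norm {k : ℕ} (v : Fin k → ℝ) :
    enorm v = ‖(WithLp.equiv 2 (Fin k → ℝ)).symm v‖ := by
  rw [EuclideanSpace.norm_eq]
  simp only [WithLp.equiv_symm_apply, PiLp.toLp_apply, Real.norm_eq_abs, sq_abs]
  rfl

lemma enorm_add_le {k : ℕ} (v w : Fin k → ℝ) :
    enorm (fun j => v j + w j) ≤ enorm v + enorm w := by
  have h : (fun j => v j + w j) = v + w := rfl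
  rw [h, enorm_eq_norm, enorm_eq_norm, enorm_eq_norm, WithLp.equiv_symm_apply, WithLp.toLp_add]
  exact norm_add_le _ _

lemma enorm_smul' {k : ℕ} (t : ℝ) (v : Fin k → ℝ) :
    enorm (fun j => t * v j) = |t| * enorm v := by
  unfold enorm
  rw [← Real.sqrt_sq_eq_abs, ← Real.sqrt_mul (sq_nonneg t), Finset.mul_sum]
  congr 1
  exact Finset.sum_congr rfl fun i _ => by ring

lemma enorm_abs {k : ℕ} (v : Fin k → ℝ) : enorm (fun j => |v j|) = enorm v := by
  unfold enorm
  congr 1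
  exact Finset.sum_congr rfl fun i _ => sq_abs (v i)

lemma abs_le_enorm {k : ℕ} (v : Fin k → ℝ) (j : Fin k) : |v j| ≤ enorm v := by
  rw [← Real.sqrt_sq_eq_abs]
  exact Real.sqrt_le_sqrt (Finset.single_le_sum (fun i _ => sq_nonneg (v i)) (Finset.mem_univ j))

lemma enorm_mono {k : ℕ} {v w : Fin k → ℝ} (h : ∀ j, |v j| ≤ w j) : enorm v ≤ enorm w := by
  apply Real.sqrt_le_sqrt
  apply Finset.sum_le_sum
  intro i _
  nlinarith [h i, abs_nonneg (v i), sq_abs (v i)]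

lemma enorm_eq_zero {k : ℕ} {v : Fin k → ℝ} (h : enorm v = 0) : v = 0 := by
  have hs : (∑ i, v i ^ 2) = 0 := by
    have h0 : (0:ℝ) ≤ ∑ i, v i ^ 2 := Finset.sum_nonneg fun i _ => sq_nonneg _
    have := Real.sqrt_eq_zero h0 |>.mp h
    exact this
  funext j
  have := (Finset.sum_eq_zero_iff_of_nonneg fun i _ => sq_nonneg (v i)).mp hs j (Finset.mem_univ j)
  exact pow_eq_zero_iff (by norm_num) |>.mp this

lemma enorm_sum_le {k : ℕ} {N : ℕ} (F : Fin N → Fin k → ℝ) :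
    enorm (fun j => ∑ i, F i j) ≤ ∑ i, enorm (F i) := by
  induction N with
  | zero => simp [enorm]
  | succ N ih =>
    calc enorm (fun j => ∑ i : Fin (N+1), F i j)
        = enorm (fun j => F 0 j + ∑ i : Fin N, F i.succ j) := by
          congr 1; funext j; rw [Fin.sum_univ_succ]
      _ ≤ enorm (F 0) + enorm (fun j => ∑ i : Fin N, F i.succ j) := enorm_add_le _ _
      _ ≤ enorm (F 0) + ∑ i : Fin N, enorm (F i.succ) := by
          linarith [ih (fun i => F i.succ)]
      _ = ∑ i : Fin (N+1), enorm (F i) := (Fin.sum_univ_succ fun i => enorm (F i)).symm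

lemma enorm_le_weighted {k N : ℕ} (v : Fin k → ℝ) (t : Fin N → ℝ) (w : Fin N → Fin k → ℝ)
    (ht : ∀ i, 0 ≤ t i) (h : ∀ j, |v j| ≤ ∑ i, t i * |w i j|) :
    enorm v ≤ ∑ i, t i * enorm (w i) := by
  calc enorm v ≤ enorm (fun j => ∑ i, t i * |w i j|) := enorm_mono h
    _ ≤ ∑ i, enorm (fun j => t i * |w i j|) := enorm_sum_le _
    _ = ∑ i, t i * enorm (w i) := by
        refine Finset.sum_congr rfl fun i _ => ?_
        rw [enorm_smul' (t i) (fun j => |w i j|), enorm_abs, abs_of_nonneg (ht i)]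

/-! ### spec lemmas -/

lemma enorm_mulVec_le_rows {a b : ℕ} (M : Matrix (Fin a) (Fin b) ℝ) (v : Fin b → ℝ) :
    enorm (M.mulVec v) ≤ enorm (fun i => ∑ j, |M i j|) * enorm v := by
  have h : ∀ i, |M.mulVec v i| ≤ (∑ j, |M i j|) * enorm v := by
    intro i
    calc |M.mulVec v i| = |∑ j, M i j * v j| := by
          simp [Matrix.mulVec, dotProduct]
      _ ≤ ∑ j, |M i j * v j| := Finset.abs_sum_le_sum_abs _ _
      _ ≤ ∑ j, |M i j| * enorm v := by
          refine Finset.sum_le_sum fun j _ => ?_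
          rw [abs_mul]
          exact mul_le_mul_of_nonneg_left (abs_le_enorm v j) (abs_nonneg _)
      _ = (∑ j, |M i j|) * enorm v := by rw [Finset.sum_mul]
  calc enorm (M.mulVec v) ≤ enorm (fun i => (∑ j, |M i j|) * enorm v) := enorm_mono h
    _ = enorm (fun i => enorm v * (∑ j, |M i j|)) := by
        congr 1; funext i; ring
    _ = |enorm v| * enorm (fun i => ∑ j, |M i j|) := enorm_smul' _ _
    _ = enorm (fun i => ∑ j, |M i j|) * enorm v := by
        rw [abs_of_nonneg (enorm_nonneg v)]; ring

lemma spec_bddAbove {a b : ℕ} (M : Matrix (Fin a) (Fin b) ℝ) :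
    BddAbove (Set.range fun v : {v : Fin b → ℝ // enorm v ≤ 1} => enorm (M.mulVec v.1)) := by
  refine ⟨enorm (fun i => ∑ j, |M i j|), ?_⟩
  rintro x ⟨v, rfl⟩
  calc enorm (M.mulVec v.1) ≤ enorm (fun i => ∑ j, |M i j|) * enorm v.1 :=
        enorm_mulVec_le_rows M v.1
    _ ≤ enorm (fun i => ∑ j, |M i j|) * 1 :=
        mul_le_mul_of_nonneg_left v.2 (enorm_nonneg _)
    _ = enorm (fun i => ∑ j, |M i j|) := mul_one _

lemma enorm_zero' {k : ℕ} : enorm (0 : Fin k → ℝ) = 0 := by simp [enorm]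

lemma spec_nonneg {a b : ℕ} (M : Matrix (Fin a) (Fin b) ℝ) : 0 ≤ spec M := by
  have h : enorm (M.mulVec (0 : Fin b → ℝ)) ≤ spec M :=
    le_ciSup (spec_bddAbove M) ⟨0, by rw [enorm_zero']; norm_num⟩
  exact le_trans (enorm_nonneg _) h

lemma enorm_mulVec_le {a b : ℕ} (M : Matrix (Fin a) (Fin b) ℝ) (v : Fin b → ℝ) :
    enorm (M.mulVec v) ≤ spec M * enorm v := by
  rcases eq_or_ne (enorm v) 0 with h0 | h0
  · have hv : v = 0 := enorm_eq_zero h0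
    simp [hv, Matrix.mulVec_zero, enorm_zero']
  · have he : 0 < enorm v := lt_of_le_of_ne (enorm_nonneg v) (Ne.symm h0)
    set e := enorm v with hedef
    have hw : enorm (fun j => e⁻¹ * v j) = 1 := by
      rw [enorm_smul', abs_of_nonneg (by positivity)]
      field_simp
      exact hedef.symm
    have hsmul : M.mulVec (fun j => e⁻¹ * v j) = fun i => e⁻¹ * M.mulVec v i := by
      have : (fun j => e⁻¹ * v j) = (e⁻¹ • v) := rfl
      rw [this, Matrix.mulVec_smul]
      rfl
    have h1 : enorm (M.mulVec (fun j => e⁻¹ * v j)) ≤ spec M :=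
      le_ciSup (spec_bddAbove M) ⟨(fun j => e⁻¹ * v j), le_of_eq hw⟩
    rw [hsmul, enorm_smul', abs_of_nonneg (by positivity)] at h1
    calc enorm (M.mulVec v) = e * (e⁻¹ * enorm (M.mulVec v)) := by field_simp
      _ ≤ e * spec M := mul_le_mul_of_nonneg_left h1 he.le
      _ = spec M * e := mul_comm _ _

/-! ### vinf / rowNorm3 lemmas -/

lemma abs_le_vinf {k : ℕ} (v : Fin k → ℝ) (j : Fin k) : |v j| ≤ vinf v :=
  le_ciSup (f := fun i => |v i|) (Set.Finite.bddAbove (Set.finite_range _)) j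

lemma vinf_le {k : ℕ} {v : Fin k → ℝ} {M : ℝ} (hM : 0 ≤ M) (h : ∀ j, |v j| ≤ M) :
    vinf v ≤ M := by
  rcases isEmpty_or_nonempty (Fin k) with hk | hk
  · unfold vinf
    rw [Real.iSup_of_isEmpty]
    exact hM
  · exact ciSup_le h

lemma rowNorm3_nonneg {n m : ℕ} (s : ℝ) (A : Matrix (Fin n) (Fin m) ℝ)
    (B : Matrix (Fin n) (Fin n) ℝ) (v : Fin n → ℝ) : 0 ≤ rowNorm3 s A B v := by
  rcases isEmpty_or_nonempty (Fin n) with hk | hk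
  · unfold rowNorm3
    rw [Real.iSup_of_isEmpty]
  · obtain ⟨j⟩ := hk
    have h1 : (0:ℝ) ≤ ∑ l, |s * A j l| + ∑ l, |B j l| + |v j| := by positivity
    exact le_trans h1 (le_ciSup (f := fun i => ∑ l, |s * A i l| + ∑ l, |B i l| + |v i|)
      (Set.Finite.bddAbove (Set.finite_range _)) j)

lemma gate_bound {n m : ℕ} (W : Matrix (Fin n) (Fin m) ℝ) (U : Matrix (Fin n) (Fin n) ℝ)
    (b : Fin n → ℝ) {umax : ℝ} (hu : 0 ≤ umax) {u : Fin m → ℝ} (hum : vinf u ≤ umax)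
    {h : Fin n → ℝ} (hh : vinf h ≤ 1) (j : Fin n) :
    |(W.mulVec u + U.mulVec h + b) j| ≤ rowNorm3 umax W U b := by
  have e : (W.mulVec u + U.mulVec h + b) j
      = (∑ l, W j l * u l) + (∑ l, U j l * h l) + b j := by
    simp [Matrix.mulVec, dotProduct]
  have t1 : |∑ l, W j l * u l| ≤ ∑ l, |umax * W j l| := by
    refine le_trans (Finset.abs_sum_le_sum_abs _ _) (Finset.sum_le_sum fun l _ => ?_)
    rw [abs_mul, abs_mul, abs_of_nonneg hu, mul_comm]
    exact mul_le_mul_of_nonneg_right (le_trans (abs_le_vinf u l) hum) (abs_nonneg _)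
  have t2 : |∑ l, U j l * h l| ≤ ∑ l, |U j l| := by
    refine le_trans (Finset.abs_sum_le_sum_abs _ _) (Finset.sum_le_sum fun l _ => ?_)
    rw [abs_mul]
    calc |U j l| * |h l| ≤ |U j l| * 1 :=
          mul_le_mul_of_nonneg_left (le_trans (abs_le_vinf h l) hh) (abs_nonneg _)
      _ = |U j l| := mul_one _
  have t3 : |(W.mulVec u + U.mulVec h + b) j|
      ≤ ∑ l, |umax * W j l| + ∑ l, |U j l| + |b j| := by
    rw [e]
    calc |(∑ l, W j l * u l) + (∑ l, U j l * h l) + b j|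
        ≤ |(∑ l, W j l * u l) + (∑ l, U j l * h l)| + |b j| := abs_add_le _ _
      _ ≤ |∑ l, W j l * u l| + |∑ l, U j l * h l| + |b j| := by
          linarith [abs_add_le (∑ l, W j l * u l) (∑ l, U j l * h l)]
      _ ≤ ∑ l, |umax * W j l| + ∑ l, |U j l| + |b j| := by linarith
  exact le_trans t3 (le_ciSup (f := fun i => ∑ l, |umax * W i l| + ∑ l, |U i l| + |b i|)
      (Set.Finite.bddAbove (Set.finite_range _)) j)

end Aux

section Aux2

lemma sqrt_add_le {x y : ℝ} (hx : 0 ≤ x) (hy : 0 ≤ y) :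
    Real.sqrt (x + y) ≤ Real.sqrt x + Real.sqrt y := by
  have hx2 := Real.sq_sqrt hx
  have hy2 := Real.sq_sqrt hy
  have h : x + y ≤ (Real.sqrt x + Real.sqrt y) ^ 2 := by
    nlinarith [Real.sqrt_nonneg x, Real.sqrt_nonneg y]
  calc Real.sqrt (x + y) ≤ Real.sqrt ((Real.sqrt x + Real.sqrt y) ^ 2) := Real.sqrt_le_sqrt h
    _ = |Real.sqrt x + Real.sqrt y| := Real.sqrt_sq_eq_abs _
    _ = Real.sqrt x + Real.sqrt y := abs_of_nonneg (by positivity)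

lemma enorm_term {k : ℕ} (t : ℝ) (ht : 0 ≤ t) (w : Fin k → ℝ) :
    enorm (fun j => t * |w j|) = t * enorm w := by
  rw [enorm_smul' t (fun j => |w j|), enorm_abs, abs_of_nonneg ht]

lemma enorm_le_three {k : ℕ} (v w1 w2 w3 : Fin k → ℝ) (t1 t2 t3 : ℝ)
    (h1 : 0 ≤ t1) (h2 : 0 ≤ t2) (h3 : 0 ≤ t3)
    (h : ∀ j, |v j| ≤ t1 * |w1 j| + t2 * |w2 j| + t3 * |w3 j|) :
    enorm v ≤ t1 * enorm w1 + t2 * enorm w2 + t3 * enorm w3 := by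
  calc enorm v ≤ enorm (fun j => t1 * |w1 j| + t2 * |w2 j| + t3 * |w3 j|) := enorm_mono h
    _ ≤ enorm (fun j => t1 * |w1 j| + t2 * |w2 j|) + enorm (fun j => t3 * |w3 j|) :=
        enorm_add_le _ _
    _ ≤ enorm (fun j => t1 * |w1 j|) + enorm (fun j => t2 * |w2 j|)
        + enorm (fun j => t3 * |w3 j|) := by
        linarith [enorm_add_le (fun j => t1 * |w1 j|) (fun j => t2 * |w2 j|)]
    _ = t1 * enorm w1 + t2 * enorm w2 + t3 * enorm w3 := by
        rw [enorm_term t1 h1, enorm_term t2 h2, enorm_term t3 h3]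

lemma enorm_le_seven {k : ℕ} (v w1 w2 w3 w4 w5 w6 w7 : Fin k → ℝ)
    (t1 t2 t3 t4 t5 t6 t7 : ℝ)
    (h1 : 0 ≤ t1) (h2 : 0 ≤ t2) (h3 : 0 ≤ t3) (h4 : 0 ≤ t4) (h5 : 0 ≤ t5)
    (h6 : 0 ≤ t6) (h7 : 0 ≤ t7)
    (h : ∀ j, |v j| ≤ t1 * |w1 j| + t2 * |w2 j| + t3 * |w3 j| + t4 * |w4 j|
      + t5 * |w5 j| + t6 * |w6 j| + t7 * |w7 j|) :
    enorm v ≤ t1 * enorm w1 + t2 * enorm w2 + t3 * enorm w3 + t4 * enorm w4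
      + t5 * enorm w5 + t6 * enorm w6 + t7 * enorm w7 := by
  have e7 := enorm_add_le (fun j => t1 * |w1 j| + t2 * |w2 j| + t3 * |w3 j| + t4 * |w4 j|
      + t5 * |w5 j| + t6 * |w6 j|) (fun j => t7 * |w7 j|)
  have e6 := enorm_add_le (fun j => t1 * |w1 j| + t2 * |w2 j| + t3 * |w3 j| + t4 * |w4 j|
      + t5 * |w5 j|) (fun j => t6 * |w6 j|)
  have e5 := enorm_add_le (fun j => t1 * |w1 j| + t2 * |w2 j| + t3 * |w3 j| + t4 * |w4 j|)
      (fun j => t5 * |w5 j|)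
  have e4 := enorm_add_le (fun j => t1 * |w1 j| + t2 * |w2 j| + t3 * |w3 j|)
      (fun j => t4 * |w4 j|)
  have e3 := enorm_add_le (fun j => t1 * |w1 j| + t2 * |w2 j|) (fun j => t3 * |w3 j|)
  have e2 := enorm_add_le (fun j => t1 * |w1 j|) (fun j => t2 * |w2 j|)
  have hm := enorm_mono h
  rw [enorm_term t1 h1, enorm_term t2 h2] at e2
  rw [enorm_term t3 h3] at e3
  rw [enorm_term t4 h4] at e4
  rw [enorm_term t5 h5] at e5
  rw [enorm_term t6 h6] at e6
  rw [enorm_term t7 h7] at e7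
  linarith

/-- The Perron-type weight construction for nonnegative 2×2 matrices. -/
lemma perron {a b c d : ℝ} (ha : 0 ≤ a) (hb : 0 ≤ b) (hc : 0 ≤ c) (hd : 0 ≤ d)
    (hlam : (a + d + Real.sqrt ((a - d) ^ 2 + 4 * (b * c))) / 2 < 1) :
    ∃ μ w1 w2 : ℝ, 1/2 ≤ μ ∧ μ < 1 ∧ 0 < w1 ∧ 0 < w2 ∧
      a * w1 + b * w2 ≤ μ * w1 ∧ c * w1 + d * w2 ≤ μ * w2 := by
  set s := Real.sqrt ((a - d) ^ 2 + 4 * (b * c)) with hs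
  have hbc : 0 ≤ b * c := mul_nonneg hb hc
  have hs0 : 0 ≤ s := Real.sqrt_nonneg _
  have hs2 : s ^ 2 = (a - d) ^ 2 + 4 * (b * c) := Real.sq_sqrt (by positivity)
  have habs : |a - d| ≤ s := by
    rw [← Real.sqrt_sq_eq_abs]
    exact Real.sqrt_le_sqrt (by nlinarith)
  set lam := (a + d + s) / 2 with hlamdef
  have hmaxa : a ≤ lam := by
    have := le_abs_self (a - d)
    rw [hlamdef]; linarith
  have hmaxd : d ≤ lam := by
    have := neg_abs_le (a - d)
    rw [hlamdef]; linarith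
  have hlam0 : 0 ≤ lam := le_trans ha hmaxa
  set μ := (1 + lam) / 2 with hμ
  have hμlam : lam < μ := by rw [hμ]; linarith
  have hμ1 : μ < 1 := by rw [hμ]; linarith
  have hμhalf : 1/2 ≤ μ := by rw [hμ]; linarith
  have hq : 0 ≤ μ ^ 2 - (a + d) * μ + a * d - b * c := by
    have hfact : μ ^ 2 - (a + d) * μ + a * d - b * c
        = (μ - (a + d + s) / 2) * (μ - (a + d - s) / 2) := by
      linear_combination ((1:ℝ)/4) * hs2
    rw [hfact]
    have h1 : 0 < μ - (a + d + s) / 2 := by rw [hlamdef] at hμlam; linarith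
    have h2 : 0 < μ - (a + d - s) / 2 := by linarith
    positivity
  refine ⟨μ, μ - d + b, c + μ - a, hμhalf, hμ1, by linarith, by linarith, ?_, ?_⟩
  · nlinarith [hq]
  · nlinarith [hq]

/-- Deduce that a real nonnegative root of the characteristic polynomial of a
real `2×2` matrix is below `1` when the spectral radius is. -/
lemma specRad_lt_one_elim {A : Matrix (Fin 2) (Fin 2) ℝ} (h : specRad A < 1)
    {lam : ℝ} (hlam0 : 0 ≤ lam)
    (hroot : (lam - A 0 0) * (lam - A 1 1) - A 0 1 * A 1 0 = 0) :
    lam < 1 := by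
  have hmem : (lam : ℂ) ∈ spectrum ℂ (A.map (fun x : ℝ => (x : ℂ))) := by
    rw [spectrum.mem_iff]
    intro hunit
    rw [Matrix.isUnit_iff_isUnit_det] at hunit
    have hdet : ((algebraMap ℂ (Matrix (Fin 2) (Fin 2) ℂ)) lam
        - A.map (fun x : ℝ => (x : ℂ))).det
        = (((lam - A 0 0) * (lam - A 1 1) - A 0 1 * A 1 0 : ℝ) : ℂ) := by
      rw [Matrix.det_fin_two]
      simp [Matrix.algebraMap_matrix_apply, Matrix.map_apply]
    rw [hdet, hroot] at hunit
    simp only [Complex.ofReal_zero] at hunit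
    exact not_isUnit_zero hunit
  have hle : (‖(lam : ℂ)‖₊ : ℝ≥0∞) ≤ specRad A := by
    unfold specRad spectralRadius
    exact le_iSup₂ (f := fun (k : ℂ) (_ : k ∈ spectrum ℂ (A.map (fun x : ℝ => (x : ℂ)))) =>
      (‖k‖₊ : ℝ≥0∞)) (lam : ℂ) hmem
  have hlt : (‖(lam : ℂ)‖₊ : ℝ≥0∞) < 1 := lt_of_le_of_lt hle h
  have hlt' : ‖(lam : ℂ)‖ < 1 := by
    rw [← ENNReal.coe_one, ENNReal.coe_lt_coe] at hlt
    exact_mod_cast hlt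
  rwa [Complex.norm_real, Real.norm_eq_abs, abs_of_nonneg hlam0] at hlt'

end Aux2

section Dyn

variable {n m p : ℕ}

lemma cbar_nonneg (S : LSTM n m p) (umax : ℝ) :
    0 ≤ sIb S umax * sCb S umax / (1 - sFb S umax) := by
  have h1 : 0 < sIb S umax := sigmoid_pos _
  have h2 : 0 ≤ sCb S umax := tanh_nonneg' (rowNorm3_nonneg _ _ _ _)
  have h3 : sFb S umax < 1 := sigmoid_lt_one _
  exact div_nonneg (mul_nonneg h1.le h2) (by linarith)

lemma step_mem {S : LSTM n m p} {umax : ℝ} (hu : 0 < umax)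
    {x : State n} (hx : x ∈ setX S umax) {u : Fin m → ℝ} (hum : u ∈ setU m umax) :
    step S x u ∈ setX S umax := by
  have hc : vinf x.1 ≤ sIb S umax * sCb S umax / (1 - sFb S umax) := hx.1
  have hh : vinf x.2 ≤ 1 := hx.2
  have hum' : vinf u ≤ umax := hum
  constructor
  · show vinf (stepC S u x.1 x.2) ≤ sIb S umax * sCb S umax / (1 - sFb S umax)
    apply vinf_le (cbar_nonneg S umax)
    intro j
    have hf : sigmoid ((S.Wf.mulVec u + S.Uf.mulVec x.2 + S.bf) j) ≤ sFb S umax :=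
      sigmoid_mono (le_trans (le_abs_self _) (gate_bound _ _ _ hu.le hum' hh j))
    have hfpos := sigmoid_pos ((S.Wf.mulVec u + S.Uf.mulVec x.2 + S.bf) j)
    have hi : sigmoid ((S.Wi.mulVec u + S.Ui.mulVec x.2 + S.bi) j) ≤ sIb S umax :=
      sigmoid_mono (le_trans (le_abs_self _) (gate_bound _ _ _ hu.le hum' hh j))
    have hipos := sigmoid_pos ((S.Wi.mulVec u + S.Ui.mulVec x.2 + S.bi) j)
    have htc : |Real.tanh ((S.Wc.mulVec u + S.Uc.mulVec x.2 + S.bc) j)| ≤ sCb S umax :=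
      abs_tanh_le (gate_bound _ _ _ hu.le hum' hh j)
    have hcj : |x.1 j| ≤ sIb S umax * sCb S umax / (1 - sFb S umax) :=
      le_trans (abs_le_vinf _ j) hc
    have hkey : sFb S umax * (sIb S umax * sCb S umax / (1 - sFb S umax))
        + sIb S umax * sCb S umax = sIb S umax * sCb S umax / (1 - sFb S umax) := by
      have h3 : sFb S umax < 1 := sigmoid_lt_one _
      have h4 : (1 : ℝ) - sFb S umax ≠ 0 := by linarith
      field_simp [h4]
      ring
    have h6 : |stepC S u x.1 x.2 j|
        ≤ sigmoid ((S.Wf.mulVec u + S.Uf.mulVec x.2 + S.bf) j) * |x.1 j|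
          + sigmoid ((S.Wi.mulVec u + S.Ui.mulVec x.2 + S.bi) j)
            * |Real.tanh ((S.Wc.mulVec u + S.Uc.mulVec x.2 + S.bc) j)| := by
      unfold stepC
      calc |_ * x.1 j + _ * Real.tanh _|
          ≤ |_ * x.1 j| + |_ * Real.tanh _| := abs_add_le _ _
        _ = _ := by rw [abs_mul, abs_mul, abs_of_pos hfpos, abs_of_pos hipos]
    have hp1 : sigmoid ((S.Wf.mulVec u + S.Uf.mulVec x.2 + S.bf) j) * |x.1 j|
        ≤ sFb S umax * (sIb S umax * sCb S umax / (1 - sFb S umax)) :=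
      mul_le_mul hf hcj (abs_nonneg _) (sigmoid_pos _).le
    have hp2 : sigmoid ((S.Wi.mulVec u + S.Ui.mulVec x.2 + S.bi) j)
        * |Real.tanh ((S.Wc.mulVec u + S.Uc.mulVec x.2 + S.bc) j)| ≤ sIb S umax * sCb S umax :=
      mul_le_mul hi htc (abs_nonneg _) (sigmoid_pos _).le
    linarith
  · show vinf (stepH S u x.1 x.2) ≤ 1
    apply vinf_le zero_le_one
    intro j
    unfold stepH
    rw [abs_mul, abs_of_pos (sigmoid_pos _)]
    have h1 := (sigmoid_lt_one ((S.Wo.mulVec u + S.Uo.mulVec x.2 + S.bo) j)).le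
    have h2 := abs_tanh_le_one (stepC S u x.1 x.2 j)
    have h3 := (sigmoid_pos ((S.Wo.mulVec u + S.Uo.mulVec x.2 + S.bo) j)).le
    have h4 := abs_nonneg (Real.tanh (stepC S u x.1 x.2 j))
    nlinarith

lemma traj_mem {S : LSTM n m p} {umax : ℝ} (hu : 0 < umax)
    {x0 : State n} (hx0 : x0 ∈ setX S umax) {u : ℕ → Fin m → ℝ} {k : ℕ}
    (hU : ∀ h < k, u h ∈ setU m umax) : ∀ j ≤ k, traj S x0 u j ∈ setX S umax := by
  intro j
  induction j with
  | zero => intro _; exact hx0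
  | succ i ih =>
    intro hik
    exact step_mem hu (ih (by omega)) (hU i (by omega))

end Dyn

section Contract

variable {n m p : ℕ}

lemma abs_add_four (a b c d : ℝ) : |a + b + c + d| ≤ |a| + |b| + |c| + |d| := by
  calc |a + b + c + d| ≤ |a + b + c| + |d| := abs_add_le _ _
    _ ≤ |a + b| + |c| + |d| := by linarith [abs_add_le (a + b) c]
    _ ≤ |a| + |b| + |c| + |d| := by linarith [abs_add_le a b]

lemma step_contract {S : LSTM n m p} {umax : ℝ} (hu : 0 < umax)
    {xa xb : State n} (hxa : xa ∈ setX S umax) (hxb : xb ∈ setX S umax)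
    {ua ub : Fin m → ℝ} (hua : ua ∈ setU m umax) (hub : ub ∈ setU m umax) :
    enorm ((step S xa ua).1 - (step S xb ub).1) ≤
      sFb S umax * enorm (xa.1 - xb.1) + alphaD S umax * enorm (xa.2 - xb.2)
        + betaD S umax * enorm (ua - ub) ∧
    enorm ((step S xa ua).2 - (step S xb ub).2) ≤
      sOb S umax * sFb S umax * enorm (xa.1 - xb.1)
        + (alphaD S umax * sOb S umax + 1 / 4 * sXb S umax * spec S.Uo) * enorm (xa.2 - xb.2)
        + (betaD S umax * sOb S umax + 1 / 4 * sXb S umax * spec S.Wo) * enorm (ua - ub) := by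
  have hca : vinf xa.1 ≤ sIb S umax * sCb S umax / (1 - sFb S umax) := hxa.1
  have hha : vinf xa.2 ≤ 1 := hxa.2
  have hcb : vinf xb.1 ≤ sIb S umax * sCb S umax / (1 - sFb S umax) := hxb.1
  have hhb : vinf xb.2 ≤ 1 := hxb.2
  have hua' : vinf ua ≤ umax := hua
  have hub' : vinf ub ≤ umax := hub
  have hC0 : 0 ≤ sCb S umax := tanh_nonneg' (rowNorm3_nonneg _ _ _ _)
  have hI0 : (0:ℝ) < sIb S umax := sigmoid_pos _
  have hF0 : (0:ℝ) < sFb S umax := sigmoid_pos _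
  have hO0 : (0:ℝ) < sOb S umax := sigmoid_pos _
  have hcb0 := cbar_nonneg S umax
  have hX0 : 0 ≤ sXb S umax := tanh_nonneg' hcb0
  have hΔz : ∀ (W : Matrix (Fin n) (Fin m) ℝ) (U : Matrix (Fin n) (Fin n) ℝ)
      (b : Fin n → ℝ) (j : Fin n),
      (W.mulVec ua + U.mulVec xa.2 + b) j - (W.mulVec ub + U.mulVec xb.2 + b) j
        = (U.mulVec (xa.2 - xb.2)) j + (W.mulVec (ua - ub)) j := by
    intro W U b j
    simp only [Pi.add_apply, Matrix.mulVec_sub, Pi.sub_apply]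
    ring
  -- pointwise bound for the `c`-component
  have hpc : ∀ j : Fin n, |((step S xa ua).1 - (step S xb ub).1) j| ≤
      sFb S umax * |(xa.1 - xb.1) j|
      + sIb S umax * sCb S umax / (1 - sFb S umax) / 4 * |(S.Uf.mulVec (xa.2 - xb.2)) j|
      + sIb S umax * sCb S umax / (1 - sFb S umax) / 4 * |(S.Wf.mulVec (ua - ub)) j|
      + sIb S umax * |(S.Uc.mulVec (xa.2 - xb.2)) j|
      + sIb S umax * |(S.Wc.mulVec (ua - ub)) j|
      + sCb S umax / 4 * |(S.Ui.mulVec (xa.2 - xb.2)) j|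
      + sCb S umax / 4 * |(S.Wi.mulVec (ua - ub)) j| := by
    intro j
    have hdec : ((step S xa ua).1 - (step S xb ub).1) j
        = sigmoid ((S.Wf.mulVec ua + S.Uf.mulVec xa.2 + S.bf) j) * ((xa.1 - xb.1) j)
          + (sigmoid ((S.Wf.mulVec ua + S.Uf.mulVec xa.2 + S.bf) j)
             - sigmoid ((S.Wf.mulVec ub + S.Uf.mulVec xb.2 + S.bf) j)) * xb.1 j
          + sigmoid ((S.Wi.mulVec ua + S.Ui.mulVec xa.2 + S.bi) j)
            * (Real.tanh ((S.Wc.mulVec ua + S.Uc.mulVec xa.2 + S.bc) j)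
               - Real.tanh ((S.Wc.mulVec ub + S.Uc.mulVec xb.2 + S.bc) j))
          + (sigmoid ((S.Wi.mulVec ua + S.Ui.mulVec xa.2 + S.bi) j)
             - sigmoid ((S.Wi.mulVec ub + S.Ui.mulVec xb.2 + S.bi) j))
            * Real.tanh ((S.Wc.mulVec ub + S.Uc.mulVec xb.2 + S.bc) j) := by
      show stepC S ua xa.1 xa.2 j - stepC S ub xb.1 xb.2 j = _
      unfold stepC
      simp only [Pi.sub_apply]
      ring
    have bf1 : sigmoid ((S.Wf.mulVec ua + S.Uf.mulVec xa.2 + S.bf) j) ≤ sFb S umax :=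
      sigmoid_mono (le_trans (le_abs_self _) (gate_bound _ _ _ hu.le hua' hha j))
    have bfp := sigmoid_pos ((S.Wf.mulVec ua + S.Uf.mulVec xa.2 + S.bf) j)
    have bi1 : sigmoid ((S.Wi.mulVec ua + S.Ui.mulVec xa.2 + S.bi) j) ≤ sIb S umax :=
      sigmoid_mono (le_trans (le_abs_self _) (gate_bound _ _ _ hu.le hua' hha j))
    have bip := sigmoid_pos ((S.Wi.mulVec ua + S.Ui.mulVec xa.2 + S.bi) j)
    have bcb : |Real.tanh ((S.Wc.mulVec ub + S.Uc.mulVec xb.2 + S.bc) j)| ≤ sCb S umax :=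
      abs_tanh_le (gate_bound _ _ _ hu.le hub' hhb j)
    have bxb : |xb.1 j| ≤ sIb S umax * sCb S umax / (1 - sFb S umax) :=
      le_trans (abs_le_vinf _ j) hcb
    have hzf : |(S.Wf.mulVec ua + S.Uf.mulVec xa.2 + S.bf) j
          - (S.Wf.mulVec ub + S.Uf.mulVec xb.2 + S.bf) j|
        ≤ |(S.Uf.mulVec (xa.2 - xb.2)) j| + |(S.Wf.mulVec (ua - ub)) j| := by
      rw [hΔz]; exact abs_add_le _ _
    have hzi : |(S.Wi.mulVec ua + S.Ui.mulVec xa.2 + S.bi) j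
          - (S.Wi.mulVec ub + S.Ui.mulVec xb.2 + S.bi) j|
        ≤ |(S.Ui.mulVec (xa.2 - xb.2)) j| + |(S.Wi.mulVec (ua - ub)) j| := by
      rw [hΔz]; exact abs_add_le _ _
    have hzc : |(S.Wc.mulVec ua + S.Uc.mulVec xa.2 + S.bc) j
          - (S.Wc.mulVec ub + S.Uc.mulVec xb.2 + S.bc) j|
        ≤ |(S.Uc.mulVec (xa.2 - xb.2)) j| + |(S.Wc.mulVec (ua - ub)) j| := by
      rw [hΔz]; exact abs_add_le _ _
    have T1 : |sigmoid ((S.Wf.mulVec ua + S.Uf.mulVec xa.2 + S.bf) j) * ((xa.1 - xb.1) j)|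
        ≤ sFb S umax * |(xa.1 - xb.1) j| := by
      rw [abs_mul, abs_of_pos bfp]
      exact mul_le_mul_of_nonneg_right bf1 (abs_nonneg _)
    have T2 : |(sigmoid ((S.Wf.mulVec ua + S.Uf.mulVec xa.2 + S.bf) j)
          - sigmoid ((S.Wf.mulVec ub + S.Uf.mulVec xb.2 + S.bf) j)) * xb.1 j|
        ≤ sIb S umax * sCb S umax / (1 - sFb S umax) / 4 * |(S.Uf.mulVec (xa.2 - xb.2)) j|
          + sIb S umax * sCb S umax / (1 - sFb S umax) / 4 * |(S.Wf.mulVec (ua - ub)) j| := by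
      rw [abs_mul]
      have l1 : |sigmoid ((S.Wf.mulVec ua + S.Uf.mulVec xa.2 + S.bf) j)
            - sigmoid ((S.Wf.mulVec ub + S.Uf.mulVec xb.2 + S.bf) j)|
          ≤ 1/4 * (|(S.Uf.mulVec (xa.2 - xb.2)) j| + |(S.Wf.mulVec (ua - ub)) j|) :=
        le_trans (sigmoid_lipschitz _ _)
          (mul_le_mul_of_nonneg_left hzf (by norm_num))
      calc |_| * |xb.1 j|
          ≤ (1/4 * (|(S.Uf.mulVec (xa.2 - xb.2)) j| + |(S.Wf.mulVec (ua - ub)) j|))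
            * (sIb S umax * sCb S umax / (1 - sFb S umax)) :=
            mul_le_mul l1 bxb (abs_nonneg _) (by positivity)

        _ = _ := by ring
    have T3 : |sigmoid ((S.Wi.mulVec ua + S.Ui.mulVec xa.2 + S.bi) j)
          * (Real.tanh ((S.Wc.mulVec ua + S.Uc.mulVec xa.2 + S.bc) j)
             - Real.tanh ((S.Wc.mulVec ub + S.Uc.mulVec xb.2 + S.bc) j))|
        ≤ sIb S umax * |(S.Uc.mulVec (xa.2 - xb.2)) j|
          + sIb S umax * |(S.Wc.mulVec (ua - ub)) j| := by
      rw [abs_mul, abs_of_pos bip]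
      have l2 : |Real.tanh ((S.Wc.mulVec ua + S.Uc.mulVec xa.2 + S.bc) j)
            - Real.tanh ((S.Wc.mulVec ub + S.Uc.mulVec xb.2 + S.bc) j)|
          ≤ |(S.Uc.mulVec (xa.2 - xb.2)) j| + |(S.Wc.mulVec (ua - ub)) j| :=
        le_trans (tanh_lipschitz _ _) hzc
      calc sigmoid ((S.Wi.mulVec ua + S.Ui.mulVec xa.2 + S.bi) j) * |_|
          ≤ sIb S umax * (|(S.Uc.mulVec (xa.2 - xb.2)) j| + |(S.Wc.mulVec (ua - ub)) j|) :=
            mul_le_mul bi1 l2 (abs_nonneg _) hI0.le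
        _ = _ := by ring
    have T4 : |(sigmoid ((S.Wi.mulVec ua + S.Ui.mulVec xa.2 + S.bi) j)
          - sigmoid ((S.Wi.mulVec ub + S.Ui.mulVec xb.2 + S.bi) j))
          * Real.tanh ((S.Wc.mulVec ub + S.Uc.mulVec xb.2 + S.bc) j)|
        ≤ sCb S umax / 4 * |(S.Ui.mulVec (xa.2 - xb.2)) j|
          + sCb S umax / 4 * |(S.Wi.mulVec (ua - ub)) j| := by
      rw [abs_mul]
      have l3 : |sigmoid ((S.Wi.mulVec ua + S.Ui.mulVec xa.2 + S.bi) j)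
            - sigmoid ((S.Wi.mulVec ub + S.Ui.mulVec xb.2 + S.bi) j)|
          ≤ 1/4 * (|(S.Ui.mulVec (xa.2 - xb.2)) j| + |(S.Wi.mulVec (ua - ub)) j|) :=
        le_trans (sigmoid_lipschitz _ _)
          (mul_le_mul_of_nonneg_left hzi (by norm_num))
      calc |_| * |Real.tanh ((S.Wc.mulVec ub + S.Uc.mulVec xb.2 + S.bc) j)|
          ≤ (1/4 * (|(S.Ui.mulVec (xa.2 - xb.2)) j| + |(S.Wi.mulVec (ua - ub)) j|))
            * sCb S umax := mul_le_mul l3 bcb (abs_nonneg _) (by positivity)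
        _ = _ := by ring
    rw [hdec]
    exact le_trans (abs_add_four _ _ _ _) (by linarith)
  -- `enorm` bound for the `c`-component
  have h7 := enorm_le_seven ((step S xa ua).1 - (step S xb ub).1)
    (xa.1 - xb.1) (S.Uf.mulVec (xa.2 - xb.2)) (S.Wf.mulVec (ua - ub))
    (S.Uc.mulVec (xa.2 - xb.2)) (S.Wc.mulVec (ua - ub))
    (S.Ui.mulVec (xa.2 - xb.2)) (S.Wi.mulVec (ua - ub))
    (sFb S umax) (sIb S umax * sCb S umax / (1 - sFb S umax) / 4)
    (sIb S umax * sCb S umax / (1 - sFb S umax) / 4) (sIb S umax) (sIb S umax)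
    (sCb S umax / 4) (sCb S umax / 4)
    hF0.le (by linarith) (by linarith) hI0.le hI0.le (by linarith) (by linarith) hpc
  have s1 := mul_le_mul_of_nonneg_left (enorm_mulVec_le S.Uf (xa.2 - xb.2))
    (by linarith : (0:ℝ) ≤ sIb S umax * sCb S umax / (1 - sFb S umax) / 4)
  have s2 := mul_le_mul_of_nonneg_left (enorm_mulVec_le S.Wf (ua - ub))
    (by linarith : (0:ℝ) ≤ sIb S umax * sCb S umax / (1 - sFb S umax) / 4)
  have s3 := mul_le_mul_of_nonneg_left (enorm_mulVec_le S.Uc (xa.2 - xb.2)) hI0.le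
  have s4 := mul_le_mul_of_nonneg_left (enorm_mulVec_le S.Wc (ua - ub)) hI0.le
  have s5 := mul_le_mul_of_nonneg_left (enorm_mulVec_le S.Ui (xa.2 - xb.2))
    (by linarith : (0:ℝ) ≤ sCb S umax / 4)
  have s6 := mul_le_mul_of_nonneg_left (enorm_mulVec_le S.Wi (ua - ub))
    (by linarith : (0:ℝ) ≤ sCb S umax / 4)
  have heq1 : sFb S umax * enorm (xa.1 - xb.1) + alphaD S umax * enorm (xa.2 - xb.2)
      + betaD S umax * enorm (ua - ub)
      = sFb S umax * enorm (xa.1 - xb.1)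
        + (sIb S umax * sCb S umax / (1 - sFb S umax) / 4 * (spec S.Uf * enorm (xa.2 - xb.2))
          + sIb S umax * (spec S.Uc * enorm (xa.2 - xb.2))
          + sCb S umax / 4 * (spec S.Ui * enorm (xa.2 - xb.2)))
        + (sIb S umax * sCb S umax / (1 - sFb S umax) / 4 * (spec S.Wf * enorm (ua - ub))
          + sIb S umax * (spec S.Wc * enorm (ua - ub))
          + sCb S umax / 4 * (spec S.Wi * enorm (ua - ub))) := by
    unfold alphaD betaD
    ring
  have part1 : enorm ((step S xa ua).1 - (step S xb ub).1) ≤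
      sFb S umax * enorm (xa.1 - xb.1) + alphaD S umax * enorm (xa.2 - xb.2)
        + betaD S umax * enorm (ua - ub) := by
    rw [heq1]; linarith
  refine ⟨part1, ?_⟩
  -- pointwise bound for the `h`-component
  have hmemb1 : step S xb ub ∈ setX S umax := step_mem hu hxb hub
  have hcb' : vinf (step S xb ub).1 ≤ sIb S umax * sCb S umax / (1 - sFb S umax) := hmemb1.1
  have hph : ∀ j : Fin n, |((step S xa ua).2 - (step S xb ub).2) j| ≤
      sOb S umax * |((step S xa ua).1 - (step S xb ub).1) j|
      + sXb S umax / 4 * |(S.Uo.mulVec (xa.2 - xb.2)) j|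
      + sXb S umax / 4 * |(S.Wo.mulVec (ua - ub)) j| := by
    intro j
    have hdec : ((step S xa ua).2 - (step S xb ub).2) j
        = sigmoid ((S.Wo.mulVec ua + S.Uo.mulVec xa.2 + S.bo) j)
            * (Real.tanh (stepC S ua xa.1 xa.2 j) - Real.tanh (stepC S ub xb.1 xb.2 j))
          + (sigmoid ((S.Wo.mulVec ua + S.Uo.mulVec xa.2 + S.bo) j)
             - sigmoid ((S.Wo.mulVec ub + S.Uo.mulVec xb.2 + S.bo) j))
            * Real.tanh (stepC S ub xb.1 xb.2 j) := by
      show stepH S ua xa.1 xa.2 j - stepH S ub xb.1 xb.2 j = _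
      unfold stepH
      ring
    have bo1 : sigmoid ((S.Wo.mulVec ua + S.Uo.mulVec xa.2 + S.bo) j) ≤ sOb S umax :=
      sigmoid_mono (le_trans (le_abs_self _) (gate_bound _ _ _ hu.le hua' hha j))
    have bop := sigmoid_pos ((S.Wo.mulVec ua + S.Uo.mulVec xa.2 + S.bo) j)
    have hzo : |(S.Wo.mulVec ua + S.Uo.mulVec xa.2 + S.bo) j
          - (S.Wo.mulVec ub + S.Uo.mulVec xb.2 + S.bo) j|
        ≤ |(S.Uo.mulVec (xa.2 - xb.2)) j| + |(S.Wo.mulVec (ua - ub)) j| := by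
      rw [hΔz]; exact abs_add_le _ _
    have btanh : |Real.tanh (stepC S ua xa.1 xa.2 j) - Real.tanh (stepC S ub xb.1 xb.2 j)|
        ≤ |((step S xa ua).1 - (step S xb ub).1) j| :=
      tanh_lipschitz _ _
    have btb : |Real.tanh (stepC S ub xb.1 xb.2 j)| ≤ sXb S umax := by
      have h1 : |stepC S ub xb.1 xb.2 j| ≤ sIb S umax * sCb S umax / (1 - sFb S umax) :=
        le_trans (abs_le_vinf _ j) hcb'
      exact abs_tanh_le h1
    have T1' : |sigmoid ((S.Wo.mulVec ua + S.Uo.mulVec xa.2 + S.bo) j)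
          * (Real.tanh (stepC S ua xa.1 xa.2 j) - Real.tanh (stepC S ub xb.1 xb.2 j))|
        ≤ sOb S umax * |((step S xa ua).1 - (step S xb ub).1) j| := by
      rw [abs_mul, abs_of_pos bop]
      exact mul_le_mul bo1 btanh (abs_nonneg _) hO0.le
    have T2' : |(sigmoid ((S.Wo.mulVec ua + S.Uo.mulVec xa.2 + S.bo) j)
          - sigmoid ((S.Wo.mulVec ub + S.Uo.mulVec xb.2 + S.bo) j))
          * Real.tanh (stepC S ub xb.1 xb.2 j)|
        ≤ sXb S umax / 4 * |(S.Uo.mulVec (xa.2 - xb.2)) j|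
          + sXb S umax / 4 * |(S.Wo.mulVec (ua - ub)) j| := by
      rw [abs_mul]
      have l1 : |sigmoid ((S.Wo.mulVec ua + S.Uo.mulVec xa.2 + S.bo) j)
            - sigmoid ((S.Wo.mulVec ub + S.Uo.mulVec xb.2 + S.bo) j)|
          ≤ 1/4 * (|(S.Uo.mulVec (xa.2 - xb.2)) j| + |(S.Wo.mulVec (ua - ub)) j|) :=
        le_trans (sigmoid_lipschitz _ _)
          (mul_le_mul_of_nonneg_left hzo (by norm_num))
      calc |_| * |Real.tanh (stepC S ub xb.1 xb.2 j)|
          ≤ (1/4 * (|(S.Uo.mulVec (xa.2 - xb.2)) j| + |(S.Wo.mulVec (ua - ub)) j|))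
            * sXb S umax := mul_le_mul l1 btb (abs_nonneg _) (by positivity)
        _ = _ := by ring
    rw [hdec]
    exact le_trans (abs_add_le _ _) (by linarith)
  have h3 := enorm_le_three ((step S xa ua).2 - (step S xb ub).2)
    ((step S xa ua).1 - (step S xb ub).1) (S.Uo.mulVec (xa.2 - xb.2)) (S.Wo.mulVec (ua - ub))
    (sOb S umax) (sXb S umax / 4) (sXb S umax / 4)
    hO0.le (by linarith) (by linarith) hph
  have s7 := mul_le_mul_of_nonneg_left (enorm_mulVec_le S.Uo (xa.2 - xb.2))
    (by linarith : (0:ℝ) ≤ sXb S umax / 4)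
  have s8 := mul_le_mul_of_nonneg_left (enorm_mulVec_le S.Wo (ua - ub))
    (by linarith : (0:ℝ) ≤ sXb S umax / 4)
  have s9 := mul_le_mul_of_nonneg_left part1 hO0.le
  have heq2 : sOb S umax * sFb S umax * enorm (xa.1 - xb.1)
      + (alphaD S umax * sOb S umax + 1 / 4 * sXb S umax * spec S.Uo) * enorm (xa.2 - xb.2)
      + (betaD S umax * sOb S umax + 1 / 4 * sXb S umax * spec S.Wo) * enorm (ua - ub)
      = sOb S umax * (sFb S umax * enorm (xa.1 - xb.1) + alphaD S umax * enorm (xa.2 - xb.2)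
          + betaD S umax * enorm (ua - ub))
        + sXb S umax / 4 * (spec S.Uo * enorm (xa.2 - xb.2))
        + sXb S umax / 4 * (spec S.Wo * enorm (ua - ub)) := by
    ring
  rw [heq2]
  linarith

end Contract

set_option maxHeartbeats 4000000 in
/-- `ρ(A_δ) < 1` implies δISS of the LSTM in `X` and `U`. -/
theorem statement2 {n m p : ℕ} (S : LSTM n m p) (umax : ℝ) (hu : 0 < umax)
    (hrho : specRad (Adelta S umax) < 1) : deltaISS S umax := by
  have hF0 : (0:ℝ) < sFb S umax := sigmoid_pos _
  have hF1 : sFb S umax < 1 := sigmoid_lt_one _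
  have hI0 : (0:ℝ) < sIb S umax := sigmoid_pos _
  have hO0 : (0:ℝ) < sOb S umax := sigmoid_pos _
  have hC0 : 0 ≤ sCb S umax := tanh_nonneg' (rowNorm3_nonneg _ _ _ _)
  have hcb0 := cbar_nonneg S umax
  have hX0 : 0 ≤ sXb S umax := tanh_nonneg' hcb0
  have hUc := spec_nonneg S.Uc
  have hUo := spec_nonneg S.Uo
  have hWc := spec_nonneg S.Wc
  have hWo := spec_nonneg S.Wo
  have hal0 : 0 ≤ alphaD S umax := by
    unfold alphaD
    have h1 : 0 ≤ 1/4 * spec S.Uf := by linarith [spec_nonneg S.Uf]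
    have h2 : 0 ≤ 1/4 * spec S.Ui := by linarith [spec_nonneg S.Ui]
    have h3 := mul_nonneg h1 hcb0
    have h4 := mul_nonneg hI0.le hUc
    have h5 := mul_nonneg h2 hC0
    linarith
  have hbe0 : 0 ≤ betaD S umax := by
    unfold betaD
    have h1 : 0 ≤ 1/4 * spec S.Wf := by linarith [spec_nonneg S.Wf]
    have h2 : 0 ≤ 1/4 * spec S.Wi := by linarith [spec_nonneg S.Wi]
    have h3 := mul_nonneg h1 hcb0
    have h4 := mul_nonneg hI0.le hWc
    have h5 := mul_nonneg h2 hC0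
    linarith
  have hc0 : 0 ≤ sOb S umax * sFb S umax := mul_nonneg hO0.le hF0.le
  have hd0 : 0 ≤ alphaD S umax * sOb S umax + 1/4 * sXb S umax * spec S.Uo := by
    have h1 := mul_nonneg hal0 hO0.le
    have h2 : 0 ≤ 1/4 * sXb S umax * spec S.Uo :=
      mul_nonneg (mul_nonneg (by norm_num) hX0) hUo
    linarith
  have hB20 : 0 ≤ betaD S umax * sOb S umax + 1/4 * sXb S umax * spec S.Wo := by
    have h1 := mul_nonneg hbe0 hO0.le
    have h2 : 0 ≤ 1/4 * sXb S umax * spec S.Wo :=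
      mul_nonneg (mul_nonneg (by norm_num) hX0) hWo
    linarith
  -- matrix entries
  have hA00 : Adelta S umax 0 0 = sFb S umax := rfl
  have hA01 : Adelta S umax 0 1 = alphaD S umax := rfl
  have hA10 : Adelta S umax 1 0 = sOb S umax * sFb S umax := rfl
  have hA11 : Adelta S umax 1 1
      = alphaD S umax * sOb S umax + 1/4 * sXb S umax * spec S.Uo := rfl
  -- the Perron root of `Adelta`
  have hbc' : (0:ℝ) ≤ (sFb S umax - (alphaD S umax * sOb S umax
        + 1/4 * sXb S umax * spec S.Uo)) ^ 2
      + 4 * (alphaD S umax * (sOb S umax * sFb S umax)) := by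
    have h1 := mul_nonneg hal0 hc0
    have h2 := sq_nonneg (sFb S umax - (alphaD S umax * sOb S umax
      + 1/4 * sXb S umax * spec S.Uo))
    linarith
  have hs2 : (Real.sqrt ((sFb S umax - (alphaD S umax * sOb S umax
        + 1/4 * sXb S umax * spec S.Uo)) ^ 2
      + 4 * (alphaD S umax * (sOb S umax * sFb S umax)))) ^ 2
      = (sFb S umax - (alphaD S umax * sOb S umax + 1/4 * sXb S umax * spec S.Uo)) ^ 2
      + 4 * (alphaD S umax * (sOb S umax * sFb S umax)) := Real.sq_sqrt hbc'
  have hsq0 : 0 ≤ Real.sqrt ((sFb S umax - (alphaD S umax * sOb S umax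
        + 1/4 * sXb S umax * spec S.Uo)) ^ 2
      + 4 * (alphaD S umax * (sOb S umax * sFb S umax))) := Real.sqrt_nonneg _
  set lam := (sFb S umax + (alphaD S umax * sOb S umax + 1/4 * sXb S umax * spec S.Uo)
      + Real.sqrt ((sFb S umax - (alphaD S umax * sOb S umax
        + 1/4 * sXb S umax * spec S.Uo)) ^ 2
      + 4 * (alphaD S umax * (sOb S umax * sFb S umax)))) / 2 with hlamdef
  have hlam0 : 0 ≤ lam := by rw [hlamdef]; linarith
  have hroot : (lam - Adelta S umax 0 0) * (lam - Adelta S umax 1 1)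
      - Adelta S umax 0 1 * Adelta S umax 1 0 = 0 := by
    rw [hA00, hA01, hA10, hA11, hlamdef]
    linear_combination ((1:ℝ)/4) * hs2
  have hlam1 : lam < 1 := specRad_lt_one_elim hrho hlam0 hroot
  obtain ⟨μ, w1, w2, hμhalf, hμ1, hw1, hw2, hrow1, hrow2⟩ :=
    perron hF0.le hal0 hc0 hd0 (by rw [hlamdef] at hlam1; exact hlam1)
  have hμ0 : (0:ℝ) < μ := lt_of_lt_of_le one_half_pos hμhalf
  have hμne : (1:ℝ) - μ ≠ 0 := by linarith
  -- constants
  set K := max (betaD S umax / w1)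
    ((betaD S umax * sOb S umax + 1/4 * sXb S umax * spec S.Wo) / w2) with hKdef
  have hK0 : 0 ≤ K := le_trans (div_nonneg hbe0 hw1.le) (le_max_left _ _)
  have hKb1 : betaD S umax ≤ K * w1 := by
    have h := le_max_left (betaD S umax / w1)
      ((betaD S umax * sOb S umax + 1/4 * sXb S umax * spec S.Wo) / w2)
    rw [← hKdef, div_le_iff₀ hw1] at h
    linarith [h]
  have hKb2 : betaD S umax * sOb S umax + 1/4 * sXb S umax * spec S.Wo ≤ K * w2 := by
    have h := le_max_right (betaD S umax / w1)
      ((betaD S umax * sOb S umax + 1/4 * sXb S umax * spec S.Wo) / w2)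
    rw [← hKdef, div_le_iff₀ hw2] at h
    linarith [h]
  set C1 := (w1 + w2) * max w1⁻¹ w2⁻¹ with hC1def
  have hC1 : 0 < C1 :=
    mul_pos (by linarith) (lt_of_lt_of_le (inv_pos.mpr hw1) (le_max_left _ _))
  set C2 := (w1 + w2) * K / (1 - μ) + 1 with hC2def
  have hC2 : 0 < C2 := by
    rw [hC2def]
    have h1 : 0 ≤ (w1 + w2) * K / (1 - μ) :=
      div_nonneg (mul_nonneg (by linarith) hK0) (by linarith)
    linarith
  refine ⟨fun s k => C1 * μ ^ k * s, fun s => C2 * s, ?_, ?_, ?_⟩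
  · -- β is class KL
    refine ⟨fun k => ⟨?_, ?_, ?_⟩, fun s hs => ⟨?_, ?_⟩, ?_⟩
    · exact (continuous_const.mul continuous_id).continuousOn
    · intro x _ y _ hxy
      exact mul_lt_mul_of_pos_left hxy (mul_pos hC1 (pow_pos hμ0 k))
    · simp
    · intro k1 k2 hlt
      have h := pow_lt_pow_right_of_lt_one₀ hμ0 hμ1 hlt
      show C1 * μ ^ k2 * s < C1 * μ ^ k1 * s
      exact mul_lt_mul_of_pos_right (mul_lt_mul_of_pos_left h hC1) hs
    · have t := tendsto_pow_atTop_nhds_zero_of_lt_one hμ0.le hμ1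
      have t2 := (t.const_mul C1).mul_const s
      simpa using t2
    · intro s hs k
      exact mul_nonneg (mul_nonneg hC1.le (pow_pos hμ0 k).le) hs
  · -- γ is class K∞
    refine ⟨(continuous_const.mul continuous_id).continuousOn, by simp, ?_, ?_, ?_⟩
    · intro x _ y _ hxy
      exact mul_lt_mul_of_pos_left hxy hC2
    · intro s hs
      exact mul_nonneg hC2.le hs
    · exact Filter.Tendsto.const_mul_atTop hC2 tendsto_id
  · -- the δISS estimate
    intro k xa0 xb0 hxa0 hxb0 ua ub hua hub
    have hbdd : BddAbove (Set.range fun h : ℕ =>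
        ⨆ _ : h ∈ Finset.range k, enorm (ua h - ub h)) := by
      refine ⟨∑ i ∈ Finset.range k, enorm (ua i - ub i), ?_⟩
      rintro x ⟨h, rfl⟩
      show (⨆ _ : h ∈ Finset.range k, enorm (ua h - ub h))
        ≤ ∑ i ∈ Finset.range k, enorm (ua i - ub i)
      by_cases hh : h ∈ Finset.range k
      · rw [ciSup_pos hh]
        exact Finset.single_le_sum (f := fun i => enorm (ua i - ub i))
          (fun i _ => enorm_nonneg _) hh
      · haveI : IsEmpty (h ∈ Finset.range k) := ⟨hh⟩
        rw [Real.iSup_of_isEmpty]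
        exact Finset.sum_nonneg fun i _ => enorm_nonneg _
    set D := ⨆ h ∈ Finset.range k, enorm (ua h - ub h) with hDdef
    have hDle : ∀ h, h < k → enorm (ua h - ub h) ≤ D := by
      intro h hk
      have h1 : (⨆ _ : h ∈ Finset.range k, enorm (ua h - ub h)) ≤ D := le_ciSup hbdd h
      rwa [ciSup_pos (Finset.mem_range.mpr hk)] at h1
    have hD0 : 0 ≤ D := by
      have h1 : (⨆ _ : k ∈ Finset.range k, enorm (ua k - ub k)) ≤ D := le_ciSup hbdd k
      haveI : IsEmpty (k ∈ Finset.range k) := ⟨fun hp => by simp at hp⟩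
      rwa [Real.iSup_of_isEmpty] at h1
    have hmema := traj_mem hu hxa0 hua
    have hmemb := traj_mem hu hxb0 hub
    set ec : ℕ → ℝ := fun j => enorm ((traj S xa0 ua j).1 - (traj S xb0 ub j).1) with hec
    set eh : ℕ → ℝ := fun j => enorm ((traj S xa0 ua j).2 - (traj S xb0 ub j).2) with heh
    set V : ℕ → ℝ := fun j => max (ec j / w1) (eh j / w2) with hV
    have hVnn : ∀ j, 0 ≤ V j := fun j =>
      le_trans (div_nonneg (enorm_nonneg _) hw1.le) (le_max_left _ _)
    have hecV : ∀ j, ec j ≤ w1 * V j := by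
      intro j
      have h1 : ec j / w1 ≤ V j := le_max_left _ _
      rw [div_le_iff₀ hw1] at h1
      linarith
    have hehV : ∀ j, eh j ≤ w2 * V j := by
      intro j
      have h1 : eh j / w2 ≤ V j := le_max_right _ _
      rw [div_le_iff₀ hw2] at h1
      linarith
    have hVrec : ∀ j, j < k → V (j + 1) ≤ μ * V j + K * D := by
      intro j hj
      obtain ⟨hc1, hc2⟩ := step_contract hu (hmema j hj.le) (hmemb j hj.le)
        (hua j hj) (hub j hj)
      have hdu : enorm (ua j - ub j) ≤ D := hDle j hj
      have e1 : ec (j + 1) ≤ sFb S umax * ec j + alphaD S umax * eh j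
          + betaD S umax * enorm (ua j - ub j) := hc1
      have e2 : eh (j + 1) ≤ sOb S umax * sFb S umax * ec j
          + (alphaD S umax * sOb S umax + 1/4 * sXb S umax * spec S.Uo) * eh j
          + (betaD S umax * sOb S umax + 1/4 * sXb S umax * spec S.Wo)
            * enorm (ua j - ub j) := hc2
      apply max_le
      · rw [div_le_iff₀ hw1]
        calc ec (j + 1) ≤ sFb S umax * ec j + alphaD S umax * eh j
              + betaD S umax * enorm (ua j - ub j) := e1
          _ ≤ sFb S umax * (w1 * V j) + alphaD S umax * (w2 * V j) + betaD S umax * D := by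
              have p1 := mul_le_mul_of_nonneg_left (hecV j) hF0.le
              have p2 := mul_le_mul_of_nonneg_left (hehV j) hal0
              have p3 := mul_le_mul_of_nonneg_left hdu hbe0
              linarith
          _ = (sFb S umax * w1 + alphaD S umax * w2) * V j + betaD S umax * D := by ring
          _ ≤ (μ * w1) * V j + (K * w1) * D := by
              have p4 := mul_le_mul_of_nonneg_right hrow1 (hVnn j)
              have p5 := mul_le_mul_of_nonneg_right hKb1 hD0
              linarith
          _ = (μ * V j + K * D) * w1 := by ring
      · rw [div_le_iff₀ hw2]
        calc eh (j + 1) ≤ sOb S umax * sFb S umax * ec j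
              + (alphaD S umax * sOb S umax + 1/4 * sXb S umax * spec S.Uo) * eh j
              + (betaD S umax * sOb S umax + 1/4 * sXb S umax * spec S.Wo)
                * enorm (ua j - ub j) := e2
          _ ≤ sOb S umax * sFb S umax * (w1 * V j)
              + (alphaD S umax * sOb S umax + 1/4 * sXb S umax * spec S.Uo) * (w2 * V j)
              + (betaD S umax * sOb S umax + 1/4 * sXb S umax * spec S.Wo) * D := by
              have p1 := mul_le_mul_of_nonneg_left (hecV j) hc0
              have p2 := mul_le_mul_of_nonneg_left (hehV j) hd0
              have p3 := mul_le_mul_of_nonneg_left hdu hB20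
              linarith
          _ = (sOb S umax * sFb S umax * w1
              + (alphaD S umax * sOb S umax + 1/4 * sXb S umax * spec S.Uo) * w2) * V j
              + (betaD S umax * sOb S umax + 1/4 * sXb S umax * spec S.Wo) * D := by ring
          _ ≤ (μ * w2) * V j + (K * w2) * D := by
              have p4 := mul_le_mul_of_nonneg_right hrow2 (hVnn j)
              have p5 := mul_le_mul_of_nonneg_right hKb2 hD0
              linarith
          _ = (μ * V j + K * D) * w2 := by ring
    have hmain : ∀ j, j ≤ k → V j ≤ μ ^ j * V 0 + K * D / (1 - μ) := by
      intro j
      induction j with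
      | zero =>
        intro _
        have h1 : 0 ≤ K * D / (1 - μ) := div_nonneg (mul_nonneg hK0 hD0) (by linarith)
        have h2 : μ ^ 0 * V 0 = V 0 := by rw [pow_zero]; ring
        linarith
      | succ i ih =>
        intro hik
        have h1 := hVrec i (by omega)
        have h2 := ih (by omega)
        have key : μ * (K * D / (1 - μ)) + K * D = K * D / (1 - μ) := by
          field_simp
          ring
        calc V (i + 1) ≤ μ * V i + K * D := h1
          _ ≤ μ * (μ ^ i * V 0 + K * D / (1 - μ)) + K * D := by
              have := mul_le_mul_of_nonneg_left h2 hμ0.le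
              linarith
          _ = μ ^ (i + 1) * V 0 + (μ * (K * D / (1 - μ)) + K * D) := by ring
          _ = μ ^ (i + 1) * V 0 + K * D / (1 - μ) := by rw [key]
    have hVk := hmain k le_rfl
    have hXnn : 0 ≤ xnorm (xa0 - xb0) := Real.sqrt_nonneg _
    have hec0 : ec 0 ≤ xnorm (xa0 - xb0) := by
      apply Real.sqrt_le_sqrt
      exact le_add_of_nonneg_right (Finset.sum_nonneg fun i _ => sq_nonneg _)
    have heh0 : eh 0 ≤ xnorm (xa0 - xb0) := by
      apply Real.sqrt_le_sqrt
      exact le_add_of_nonneg_left (Finset.sum_nonneg fun i _ => sq_nonneg _)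
    have hV0 : V 0 ≤ max w1⁻¹ w2⁻¹ * xnorm (xa0 - xb0) := by
      apply max_le
      · have he : ec 0 / w1 = w1⁻¹ * ec 0 := by ring
        rw [he]
        calc w1⁻¹ * ec 0 ≤ w1⁻¹ * xnorm (xa0 - xb0) :=
              mul_le_mul_of_nonneg_left hec0 (inv_pos.mpr hw1).le
          _ ≤ max w1⁻¹ w2⁻¹ * xnorm (xa0 - xb0) :=
              mul_le_mul_of_nonneg_right (le_max_left _ _) hXnn
      · have he : eh 0 / w2 = w2⁻¹ * eh 0 := by ring
        rw [he]
        calc w2⁻¹ * eh 0 ≤ w2⁻¹ * xnorm (xa0 - xb0) :=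
              mul_le_mul_of_nonneg_left heh0 (inv_pos.mpr hw2).le
          _ ≤ max w1⁻¹ w2⁻¹ * xnorm (xa0 - xb0) :=
              mul_le_mul_of_nonneg_right (le_max_right _ _) hXnn
    have hfinal1 : xnorm (traj S xa0 ua k - traj S xb0 ub k) ≤ ec k + eh k :=
      sqrt_add_le (Finset.sum_nonneg fun i _ => sq_nonneg _)
        (Finset.sum_nonneg fun i _ => sq_nonneg _)
    have hμk0 : 0 ≤ μ ^ k := (pow_pos hμ0 k).le
    show xnorm (traj S xa0 ua k - traj S xb0 ub k)
        ≤ C1 * μ ^ k * xnorm (xa0 - xb0) + C2 * D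
    have h4 : (w1 + w2) * (μ ^ k * (max w1⁻¹ w2⁻¹ * xnorm (xa0 - xb0)) + K * D / (1 - μ))
        = C1 * μ ^ k * xnorm (xa0 - xb0) + (w1 + w2) * K / (1 - μ) * D := by
      rw [hC1def]
      ring
    have h5 : (w1 + w2) * K / (1 - μ) * D ≤ C2 * D := by
      rw [hC2def]
      have he : ((w1 + w2) * K / (1 - μ) + 1) * D = (w1 + w2) * K / (1 - μ) * D + D := by
        ring
      rw [he]
      linarith
    calc xnorm (traj S xa0 ua k - traj S xb0 ub k) ≤ ec k + eh k := hfinal1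
      _ ≤ (w1 + w2) * V k := by linarith [hecV k, hehV k]
      _ ≤ (w1 + w2) * (μ ^ k * V 0 + K * D / (1 - μ)) :=
          mul_le_mul_of_nonneg_left hVk (by linarith)
      _ ≤ (w1 + w2) * (μ ^ k * (max w1⁻¹ w2⁻¹ * xnorm (xa0 - xb0)) + K * D / (1 - μ)) := by
          have h3 := mul_le_mul_of_nonneg_left hV0 hμk0
          have := mul_le_mul_of_nonneg_left
            (by linarith : μ ^ k * V 0 + K * D / (1 - μ)
              ≤ μ ^ k * (max w1⁻¹ w2⁻¹ * xnorm (xa0 - xb0)) + K * D / (1 - μ))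
            (by linarith : (0:ℝ) ≤ w1 + w2)
          exact this
      _ = C1 * μ ^ k * xnorm (xa0 - xb0) + (w1 + w2) * K / (1 - μ) * D := h4
      _ ≤ C1 * μ ^ k * xnorm (xa0 - xb0) + C2 * D := by linarith


end LSTMmpc
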